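/- arXiv:2605.17456 — 2 statements merged into one kernel-verified Lean document; each statement's English description precedes it below -/
import Mathlib

section
/- Greedy maximization of a monotone submodular function with U(∅) = 0 under a cardinality constraint k achieves at least a (1 - 1/e) fraction of the optimum: if S_greedy is obtained by k steps of greedily adding the element of maximum marginal gain, then U(S_greedy) ≥ (1 - (1 - 1/k)^k) · max_{|S|≤k} U(S) ≥ (1 - 1/e) · max_{|S|≤k} U(S). -/
private lemma greedy_union_le_sum {V : Type*} [DecidableEq V]
    (U : Finset V → ℝ)
    (hmono : ∀ S T : Finset V, S ⊆ T → U S ≤ U T)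
    (hsub : ∀ (S T : Finset V) (i : V), S ⊆ T → i ∉ T →
      U (insert i T) - U T ≤ U (insert i S) - U S)
    (S T : Finset V) :
    U (S ∪ T) - U S ≤ ∑ i ∈ T, (U (insert i S) - U S) := by
  induction T using Finset.induction_on with
  | empty => simp
  | @insert a T ha ih =>
    rw [Finset.sum_insert ha]
    have h1 : S ∪ insert a T = insert a (S ∪ T) := by
      rw [Finset.union_insert]
    by_cases hmem : a ∈ S ∪ T
    · rw [h1, Finset.insert_eq_self.mpr hmem]
      have : (0:ℝ) ≤ U (insert a S) - U S :=
        sub_nonneg.mpr (hmono _ _ (Finset.subset_insert _ _))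
      linarith
    · have h2 := hsub S (S ∪ T) a Finset.subset_union_left hmem
      rw [h1]; linarith

/-- Nemhauser–Wolsey–Fisher greedy guarantee: for a monotone submodular `U` with
`U ∅ = 0`, `k` greedy steps attain at least `(1 - (1 - 1/k)^k) ≥ (1 - 1/e)` times
the optimum over sets of cardinality at most `k`. -/
theorem greedy_submodular_guarantee {V : Type*} [Fintype V] [DecidableEq V]
    (U : Finset V → ℝ) (hU0 : U ∅ = 0)
    (hmono : ∀ S T : Finset V, S ⊆ T → U S ≤ U T)
    (hsub : ∀ (S T : Finset V) (i : V), S ⊆ T → i ∉ T →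
      U (insert i T) - U T ≤ U (insert i S) - U S)
    (k : ℕ) (hk : 1 ≤ k) (hkV : k ≤ Fintype.card V)
    (G : ℕ → Finset V) (hG0 : G 0 = ∅)
    (hstep : ∀ n < k, ∃ i ∉ G n, G (n+1) = insert i (G n) ∧
      ∀ j ∉ G n, U (insert j (G n)) - U (G n) ≤ U (insert i (G n)) - U (G n)) :
    ∀ T : Finset V, T.card ≤ k →
      (1 - (1 - 1/(k:ℝ))^k) * U T ≤ U (G k) ∧
      (1 - Real.exp (-1)) * U T ≤ U (G k) := by
  intro T hT
  have hkpos : (0:ℝ) < k := by exact_mod_cast hk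
  have hq : (0:ℝ) ≤ 1 - 1/(k:ℝ) := by
    have : 1/(k:ℝ) ≤ 1 := by
      rw [div_le_one hkpos]; exact_mod_cast hk
    linarith
  have hUT0 : 0 ≤ U T := by
    have := hmono ∅ T (Finset.empty_subset T); rw [hU0] at this; exact this
  -- one step contraction
  have key : ∀ n < k, U T - U (G (n+1)) ≤ (1 - 1/(k:ℝ)) * (U T - U (G n)) := by
    intro n hn
    obtain ⟨i, hi, hGn1, hmax⟩ := hstep n hn
    set g : ℝ := U (G (n+1)) - U (G n) with hg
    have hg0 : 0 ≤ g := by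
      rw [hg, hGn1]
      exact sub_nonneg.mpr (hmono _ _ (Finset.subset_insert _ _))
    have hterm : ∀ j ∈ T, U (insert j (G n)) - U (G n) ≤ g := by
      intro j _
      by_cases hj : j ∈ G n
      · rw [Finset.insert_eq_self.mpr hj]; simpa using hg0
      · have := hmax j hj
        rw [hg, hGn1]; exact this
    have hsumle : ∑ j ∈ T, (U (insert j (G n)) - U (G n)) ≤ (T.card : ℝ) * g := by
      calc ∑ j ∈ T, (U (insert j (G n)) - U (G n)) ≤ ∑ _j ∈ T, g :=
            Finset.sum_le_sum hterm
        _ = (T.card : ℝ) * g := by rw [Finset.sum_const, nsmul_eq_mul]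
    have hcard : (T.card : ℝ) * g ≤ (k : ℝ) * g :=
      mul_le_mul_of_nonneg_right (by exact_mod_cast hT) hg0
    have h1 : U T ≤ U (G n ∪ T) := hmono _ _ Finset.subset_union_right
    have h2 := greedy_union_le_sum U hmono hsub (G n) T
    have hbound : U T - U (G n) ≤ (k : ℝ) * g := by linarith
    have hdiv : (U T - U (G n)) / (k:ℝ) ≤ g := by
      rw [div_le_iff₀ hkpos]; linarith [mul_comm g (k:ℝ)]
    have heq : (1 - 1/(k:ℝ)) * (U T - U (G n))
        = (U T - U (G n)) - (U T - U (G n)) / (k:ℝ) := by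
      field_simp
    rw [heq]
    have : U (G (n+1)) = U (G n) + g := by rw [hg]; ring
    linarith
  -- iterate
  have hiter : ∀ n, n ≤ k → U T - U (G n) ≤ (1 - 1/(k:ℝ))^n * U T := by
    intro n
    induction n with
    | zero => intro _; simp [hG0, hU0]
    | succ n ih =>
      intro hn
      have hnk : n < k := hn
      have h1 := key n hnk
      have h2 := ih (le_of_lt hnk)
      calc U T - U (G (n+1)) ≤ (1 - 1/(k:ℝ)) * (U T - U (G n)) := h1
        _ ≤ (1 - 1/(k:ℝ)) * ((1 - 1/(k:ℝ))^n * U T) :=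
            mul_le_mul_of_nonneg_left h2 hq
        _ = (1 - 1/(k:ℝ))^(n+1) * U T := by ring
  have hmain : (1 - (1 - 1/(k:ℝ))^k) * U T ≤ U (G k) := by
    have := hiter k le_rfl
    nlinarith [this]
  refine ⟨hmain, ?_⟩
  have hexp : (1 - 1/(k:ℝ))^k ≤ Real.exp (-1) := by
    have h1 : 1 - 1/(k:ℝ) ≤ Real.exp (-(1/(k:ℝ))) := by
      have := Real.add_one_le_exp (-(1/(k:ℝ)))
      linarith
    calc (1 - 1/(k:ℝ))^k ≤ (Real.exp (-(1/(k:ℝ))))^k := pow_le_pow_left₀ hq h1 k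
      _ = Real.exp ((k:ℝ) * (-(1/(k:ℝ)))) := by rw [← Real.exp_nat_mul]
      _ = Real.exp (-1) := by
          congr 1
          field_simp
  have : (1 - Real.exp (-1)) * U T ≤ (1 - (1 - 1/(k:ℝ))^k) * U T :=
    mul_le_mul_of_nonneg_right (by linarith) hUT0
  linarith
end

section
/- Curvature-aware greedy guarantee: for a monotone submodular function U with U(∅) = 0 and total curvature κ ∈ (0,1], greedy selection of k elements satisfies U(S_greedy) ≥ (1/κ)(1 - (1 - κ/k)^k) · max_{|S|≤k} U(S) ≥ ((1 - e^{-κ})/κ) · max_{|S|≤k} U(S). -/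
/-- Key numeric inequality: `(k-1)(1-κ/(k-1))^j + (1-κ) ≤ k(1-κ/k)^(j+1)` for `j+1 ≤ k`. -/
lemma greedy_curv_num_ineq (κ : ℝ) (hκ0 : 0 < κ) (hκ1 : κ ≤ 1) :
    ∀ (kb j : ℕ), j + 1 ≤ kb →
      ((kb : ℝ) - 1) * (1 - κ / ((kb : ℝ) - 1)) ^ j + (1 - κ)
        ≤ (kb : ℝ) * (1 - κ / (kb : ℝ)) ^ (j + 1) := by
  intro kb j
  induction j with
  | zero =>
      intro hkb
      have hkb1 : (1 : ℝ) ≤ (kb : ℝ) := by exact_mod_cast hkb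
      have hkb0 : (kb : ℝ) ≠ 0 := by linarith
      have : (kb : ℝ) * (1 - κ / (kb : ℝ)) = (kb : ℝ) - κ := by
        field_simp
      rw [pow_one, this, pow_zero]
      ring_nf
      linarith
  | succ j ih =>
      intro hkb
      have ih' := ih (by omega)
      have hkb2 : (2 : ℝ) ≤ (kb : ℝ) := by exact_mod_cast (by omega : 2 ≤ kb)
      have hkb0 : (kb : ℝ) ≠ 0 := by linarith
      have hkb10 : (kb : ℝ) - 1 ≠ 0 := by linarith
      set a := κ / (kb : ℝ) with ha
      set b := κ / ((kb : ℝ) - 1) with hb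
      have ha0 : 0 ≤ a := div_nonneg hκ0.le (by linarith)
      have hb0 : 0 ≤ b := div_nonneg hκ0.le (by linarith)
      have hb1 : b ≤ 1 := by
        rw [hb, div_le_one (by linarith)]; linarith
      have hq0 : 0 ≤ 1 - a := by
        have : a ≤ 1 := by rw [ha, div_le_one (by linarith)]; linarith
        linarith
      have hp0 : 0 ≤ 1 - b := by linarith
      -- Bernoulli: (1-b)^j ≥ 1 - j*b ≥ 1 - κ  (since j ≤ kb - 1)
      have hpj : 1 - κ ≤ (1 - b) ^ j := by
        have hber : 1 + (j : ℝ) * (-b) ≤ (1 + (-b)) ^ j :=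
          one_add_mul_le_pow (by linarith) j
        have hjb : (j : ℝ) * b ≤ κ := by
          have hj : (j : ℝ) ≤ (kb : ℝ) - 1 := by
            have h2 : (j : ℝ) + 1 + 1 ≤ (kb : ℝ) := by exact_mod_cast hkb
            linarith
          have : (j : ℝ) * b ≤ ((kb : ℝ) - 1) * b :=
            mul_le_mul_of_nonneg_right hj hb0
          have hbk : ((kb : ℝ) - 1) * b = κ := by
            rw [hb]; field_simp
          linarith
        have : (1 : ℝ) + (-b) = 1 - b := by ring
        rw [this] at hber
        have : 1 + (j : ℝ) * (-b) = 1 - (j : ℝ) * b := by ring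
        rw [this] at hber
        linarith
      have hba : ((kb : ℝ) - 1) * (b - a) = a := by
        rw [ha, hb]; field_simp; ring
      -- step:  (kb-1)(1-b)^(j+1) + (1-κ) ≤ (1-a)((kb-1)(1-b)^j + (1-κ))
      have e3 : ((kb : ℝ) - 1) * (1 - b) ^ (j + 1) + (1 - κ)
          ≤ (1 - a) * (((kb : ℝ) - 1) * (1 - b) ^ j + (1 - κ)) := by
        have key : a * (1 - κ) ≤ a * (1 - b) ^ j :=
          mul_le_mul_of_nonneg_left hpj ha0
        have expand : (1 - a) * (((kb : ℝ) - 1) * (1 - b) ^ j + (1 - κ))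
            - (((kb : ℝ) - 1) * (1 - b) ^ (j + 1) + (1 - κ))
            = (1 - b) ^ j * (((kb : ℝ) - 1) * (b - a)) - a * (1 - κ) := by
          ring
        nlinarith [key, hba, expand]
      have e2 : (1 - a) * (((kb : ℝ) - 1) * (1 - b) ^ j + (1 - κ))
          ≤ (1 - a) * ((kb : ℝ) * (1 - a) ^ (j + 1)) :=
        mul_le_mul_of_nonneg_left ih' hq0
      have e4 : (1 - a) * ((kb : ℝ) * (1 - a) ^ (j + 1)) = (kb : ℝ) * (1 - a) ^ (j + 2) := by
        ring
      calc ((kb : ℝ) - 1) * (1 - b) ^ (j + 1) + (1 - κ)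
          ≤ (1 - a) * (((kb : ℝ) - 1) * (1 - b) ^ j + (1 - κ)) := e3
        _ ≤ (1 - a) * ((kb : ℝ) * (1 - a) ^ (j + 1)) := e2
        _ = (kb : ℝ) * (1 - a) ^ (j + 2) := e4

set_option maxHeartbeats 2000000

/-- Curvature-aware greedy guarantee: for a monotone submodular `U` with `U ∅ = 0`
and total curvature `κ = 1 - min_{i : U {i} > 0} (U(V) - U(V \ {i})) / U {i}` in
`(0,1]`, greedy selection of `k` elements attains at least
`(1/κ)(1 - (1 - κ/k)^k) ≥ (1 - e^{-κ})/κ` times the optimum over sets of size ≤ k. -/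
theorem greedy_curvature_guarantee {V : Type*} [Fintype V] [DecidableEq V]
    (U : Finset V → ℝ) (hU0 : U ∅ = 0)
    (hmono : ∀ S T : Finset V, S ⊆ T → U S ≤ U T)
    (hsub : ∀ (S T : Finset V) (i : V), S ⊆ T → i ∉ T →
      U (insert i T) - U T ≤ U (insert i S) - U S)
    (κ : ℝ) (hκ : κ ∈ Set.Ioc (0:ℝ) 1)
    (hκdef : IsLeast
      ((fun i => (U Finset.univ - U (Finset.univ.erase i)) / U {i}) ''
        {i : V | 0 < U {i}}) (1 - κ))
    (k : ℕ) (hk : 1 ≤ k) (hkV : k ≤ Fintype.card V)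
    (G : ℕ → Finset V) (hG0 : G 0 = ∅)
    (hstep : ∀ n < k, ∃ i ∉ G n, G (n+1) = insert i (G n) ∧
      ∀ j ∉ G n, U (insert j (G n)) - U (G n) ≤ U (insert i (G n)) - U (G n)) :
    ∀ T : Finset V, T.card ≤ k →
      (1/κ) * (1 - (1 - κ/(k:ℝ))^k) * U T ≤ U (G k) ∧
      ((1 - Real.exp (-κ))/κ) * U T ≤ U (G k) := by
  obtain ⟨hκ0, hκ1⟩ := hκ
  have hUnn : ∀ S : Finset V, 0 ≤ U S := fun S => by
    have := hmono ∅ S (Finset.empty_subset S); rw [hU0] at this; exact this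
  -- marginal of a singleton dominates marginal at any set
  have hsingle : ∀ (i : V) (S : Finset V), i ∉ S →
      U (insert i S) - U S ≤ U {i} := by
    intro i S hiS
    have := hsub ∅ S i (Finset.empty_subset S) hiS
    simpa [hU0] using this
  -- curvature lower bound on marginals
  have hcurv : ∀ (i : V) (S : Finset V), i ∉ S →
      (1 - κ) * U {i} ≤ U (insert i S) - U S := by
    intro i S hiS
    have hsubset : S ⊆ Finset.univ.erase i :=
      (Finset.subset_erase).2 ⟨Finset.subset_univ S, hiS⟩
    have hstep1 : U (insert i (Finset.univ.erase i)) - U (Finset.univ.erase i)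
        ≤ U (insert i S) - U S :=
      hsub S (Finset.univ.erase i) i hsubset (Finset.notMem_erase i _)
    rw [Finset.insert_erase (Finset.mem_univ i)] at hstep1
    have hbase : (1 - κ) * U {i} ≤ U Finset.univ - U (Finset.univ.erase i) := by
      rcases eq_or_lt_of_le (hUnn {i}) with h0 | hpos
      · rw [← h0, mul_zero]
        have := hmono (Finset.univ.erase i) Finset.univ (Finset.erase_subset _ _)
        linarith
      · have hlb := hκdef.2 ⟨i, hpos, rfl⟩
        have : (1 - κ) * U {i} ≤ ((U Finset.univ - U (Finset.univ.erase i)) / U {i}) * U {i} :=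
          mul_le_mul_of_nonneg_right hlb (hUnn {i})
        rwa [div_mul_cancel₀ _ (ne_of_gt hpos)] at this
    linarith
  -- chain bound: adding a set B increases U by at most |B| * (max marginal)
  have chain : ∀ (A : Finset V) (σ : ℝ), 0 ≤ σ →
      (∀ x, x ∉ A → U (insert x A) - U A ≤ σ) →
      ∀ B : Finset V, U (A ∪ B) - U A ≤ (B.card : ℝ) * σ := by
    intro A σ hσ hmax B
    induction B using Finset.induction_on with
    | empty => simp
    | @insert x s hxs ih =>
        rw [Finset.union_insert]
        by_cases hx : x ∈ A ∪ s
        · rw [Finset.insert_eq_self.2 hx, Finset.card_insert_of_notMem hxs]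
          push_cast
          linarith [ih, hσ]
        · have h1 : U (insert x (A ∪ s)) - U (A ∪ s) ≤ U (insert x A) - U A :=
            hsub A (A ∪ s) x Finset.subset_union_left hx
          have h2 : U (insert x A) - U A ≤ σ :=
            hmax x (fun hxa => hx (Finset.mem_union_left _ hxa))
          rw [Finset.card_insert_of_notMem hxs]
          push_cast
          linarith [ih, h1, h2]
  -- main induction on number of remaining greedy steps
  have main : ∀ j n kb : ℕ, n + j ≤ k → j ≤ kb → ∀ T : Finset V,
      (T \ G n).card ≤ kb →
      (1 - (1 - κ / (kb : ℝ)) ^ j) * (U (T ∪ G n) - U (G n))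
        ≤ κ * (U (G (n + j)) - U (G n)) := by
    intro j
    induction j with
    | zero => intro n kb _ _ T _; simp
    | succ j ih =>
        intro n kb hnk hjkb T hT
        have hnlt : n < k := by omega
        obtain ⟨i, hiG, hG1, hmax⟩ := hstep n hnlt
        have hkbpos : 1 ≤ kb := by omega
        have hkb1 : (1 : ℝ) ≤ (kb : ℝ) := by exact_mod_cast hkbpos
        set σ := U (G (n + 1)) - U (G n) with hσdef
        have hσi : σ = U (insert i (G n)) - U (G n) := by rw [hσdef, hG1]
        have hσ0 : 0 ≤ σ := by
          rw [hσdef, hG1]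
          have := hmono (G n) (insert i (G n)) (Finset.subset_insert _ _)
          linarith
        have hmax' : ∀ x, x ∉ G n → U (insert x (G n)) - U (G n) ≤ σ := by
          intro x hx; rw [hσi]; exact hmax x hx
        set D := U (T ∪ G n) - U (G n) with hDdef
        have hD0 : 0 ≤ D := by
          have := hmono (G n) (T ∪ G n) Finset.subset_union_right
          rw [hDdef]; linarith
        have hDchain : D ≤ ((T \ G n).card : ℝ) * σ := by
          have h := chain (G n) σ hσ0 hmax' (T \ G n)
          rwa [Finset.union_sdiff_self_eq_union, Finset.union_comm, ← hDdef] at h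
        have hDkb : D ≤ (kb : ℝ) * σ := by
          calc D ≤ ((T \ G n).card : ℝ) * σ := hDchain
            _ ≤ (kb : ℝ) * σ :=
              mul_le_mul_of_nonneg_right (by exact_mod_cast hT) hσ0
        set q := 1 - κ / (kb : ℝ) with hq
        have hq0 : 0 ≤ q := by
          rw [hq]
          have : κ / (kb : ℝ) ≤ 1 := by
            rw [div_le_one (by linarith)]; linarith
          linarith
        have hq1 : q ≤ 1 := by
          rw [hq]
          have : 0 ≤ κ / (kb : ℝ) := div_nonneg hκ0.le (by linarith)
          linarith
        have hkbne : ((kb : ℝ)) ≠ 0 := by linarith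
        have hκq : (1 - q) * (kb : ℝ) = κ := by
          rw [hq]
          have h5 : (1 : ℝ) - (1 - κ / (kb : ℝ)) = κ / (kb : ℝ) := by ring
          rw [h5]
          exact div_mul_cancel₀ κ hkbne
        have hsplit : U (G (n + (j + 1))) - U (G n)
            = (U (G (n + 1 + j)) - U (G (n + 1))) + σ := by
          rw [show n + (j + 1) = n + 1 + j from by omega, hσdef]; ring
        set Z := U (G (n + 1 + j)) - U (G (n + 1)) with hZdef
        by_cases hiT : i ∈ T
        · -- greedy picked an element of T : budget shrinks
          have hTsd : T \ G (n + 1) = (T \ G n).erase i := by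
            rw [hG1, Finset.sdiff_insert]
          have hiTG : i ∈ T \ G n := Finset.mem_sdiff.2 ⟨hiT, hiG⟩
          have hcard' : (T \ G (n + 1)).card ≤ kb - 1 := by
            rw [hTsd, Finset.card_erase_of_mem hiTG]
            have : 1 ≤ (T \ G n).card := Finset.card_pos.2 ⟨i, hiTG⟩
            omega
          have hUnion : T ∪ G (n + 1) = T ∪ G n := by
            rw [hG1, Finset.union_insert,
              Finset.insert_eq_self.2 (Finset.mem_union_left _ hiT)]
          have hΔ : U (T ∪ G (n + 1)) - U (G (n + 1)) = D - σ := by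
            rw [hUnion, hDdef, hσdef]; ring
          have ihin := ih (n + 1) (kb - 1) (by omega) (by omega) T hcard'
          rw [hΔ, ← hZdef] at ihin
          have hcast : ((kb - 1 : ℕ) : ℝ) = (kb : ℝ) - 1 := by
            push_cast [Nat.cast_sub hkbpos]; ring
          rw [hcast] at ihin
          set P := 1 - κ / ((kb : ℝ) - 1) with hP
          -- ihin : (1 - P ^ j) * (D - σ) ≤ κ * Z
          have hPj : 1 - κ ≤ P ^ j := by
            rcases Nat.eq_zero_or_pos j with hj0 | hjpos
            · rw [hj0, pow_zero]; linarith
            · have hkb2 : 2 ≤ kb := by omega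
              have hkb2' : (2 : ℝ) ≤ (kb : ℝ) := by exact_mod_cast hkb2
              have hb0 : 0 ≤ κ / ((kb : ℝ) - 1) := div_nonneg hκ0.le (by linarith)
              have hb1 : κ / ((kb : ℝ) - 1) ≤ 1 := by
                rw [div_le_one (by linarith)]; linarith
              have hber : 1 + (j : ℝ) * (-(κ / ((kb : ℝ) - 1)))
                  ≤ (1 + (-(κ / ((kb : ℝ) - 1)))) ^ j :=
                one_add_mul_le_pow (by linarith) j
              have hjb : (j : ℝ) * (κ / ((kb : ℝ) - 1)) ≤ κ := by
                have hj : (j : ℝ) ≤ (kb : ℝ) - 1 := by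
                  have : j ≤ kb - 1 := by omega
                  have h2 : ((j : ℕ) : ℝ) ≤ ((kb - 1 : ℕ) : ℝ) := by exact_mod_cast this
                  rwa [hcast] at h2
                have h3 : (j : ℝ) * (κ / ((kb : ℝ) - 1))
                    ≤ ((kb : ℝ) - 1) * (κ / ((kb : ℝ) - 1)) :=
                  mul_le_mul_of_nonneg_right hj hb0
                have h4 : ((kb : ℝ) - 1) * (κ / ((kb : ℝ) - 1)) = κ := by
                  rw [mul_comm]
                  exact div_mul_cancel₀ κ (by linarith)
                linarith
              have : (1 : ℝ) + (-(κ / ((kb : ℝ) - 1))) = P := by rw [hP]; ring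
              rw [this] at hber
              have : 1 + (j : ℝ) * (-(κ / ((kb : ℝ) - 1)))
                  = 1 - (j : ℝ) * (κ / ((kb : ℝ) - 1)) := by ring
              rw [this] at hber
              linarith
          have hineq := greedy_curv_num_ineq κ hκ0 hκ1 kb j hjkb
          rw [← hP, ← hq] at hineq
          -- assemble, multiplied by kb
          have t5 : (1 - P ^ j) * D + σ * (P ^ j - (1 - κ)) ≤ κ * σ + κ * Z := by
            linarith [ihin]
          have t6 : 0 ≤ (P ^ j - (1 - κ)) * ((kb : ℝ) * σ - D) :=
            mul_nonneg (by linarith) (by linarith)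
          have t7 : (kb : ℝ) * ((1 - P ^ j) * D + σ * (P ^ j - (1 - κ)))
              ≤ (kb : ℝ) * (κ * σ + κ * Z) :=
            mul_le_mul_of_nonneg_left t5 (by linarith)
          have t9 : D * (((kb : ℝ) - 1) * P ^ j + (1 - κ))
              ≤ D * ((kb : ℝ) * q ^ (j + 1)) :=
            mul_le_mul_of_nonneg_left hineq hD0
          have key : (kb : ℝ) * ((1 - q ^ (j + 1)) * D) ≤ (kb : ℝ) * (κ * (Z + σ)) := by
            have hps : q ^ (j + 1) = q ^ j * q := pow_succ q j
            linarith [t7, t6, t9]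
          have hkbpos' : (0 : ℝ) < (kb : ℝ) := by linarith
          have key' : (1 - q ^ (j + 1)) * D ≤ κ * (Z + σ) :=
            le_of_mul_le_mul_left key hkbpos'
          rw [hsplit]; linarith [key']
        · -- greedy picked an element outside T
          have hTsd : T \ G (n + 1) = T \ G n := by
            rw [hG1, Finset.sdiff_insert, Finset.erase_eq_of_notMem
              (fun h => hiT (Finset.mem_sdiff.1 h).1)]
          have ihout := ih (n + 1) kb (by omega) (by omega) T (by rw [hTsd]; exact hT)
          rw [← hZdef] at ihout
          have hUnion : T ∪ G (n + 1) = insert i (T ∪ G n) := by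
            rw [hG1, Finset.union_insert]
          have hiTU : i ∉ T ∪ G n := by
            intro h; rcases Finset.mem_union.1 h with h | h
            · exact hiT h
            · exact hiG h
          have hσU : σ ≤ U {i} := by
            rw [hσi]; exact hsingle i (G n) hiG
          have hΔlb : D - κ * σ ≤ U (T ∪ G (n + 1)) - U (G (n + 1)) := by
            have h1 : (1 - κ) * U {i} ≤ U (insert i (T ∪ G n)) - U (T ∪ G n) :=
              hcurv i (T ∪ G n) hiTU
            have h2 : (1 - κ) * σ ≤ (1 - κ) * U {i} :=
              mul_le_mul_of_nonneg_left hσU (by linarith)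
            have h3 : U (G (n + 1)) = U (G n) + σ := by rw [hσdef]; ring
            rw [hUnion, h3, hDdef]
            linarith
          set Δ := U (T ∪ G (n + 1)) - U (G (n + 1)) with hΔdef
          -- ihout : (1 - q ^ j) * Δ ≤ κ * Z
          have hqj0 : 0 ≤ q ^ j := pow_nonneg hq0 j
          have hqj1 : q ^ j ≤ 1 := pow_le_one₀ hq0 hq1
          have s1 : (1 - q ^ j) * (D - κ * σ) ≤ κ * Z := by
            calc (1 - q ^ j) * (D - κ * σ) ≤ (1 - q ^ j) * Δ :=
                  mul_le_mul_of_nonneg_left hΔlb (by linarith)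
              _ ≤ κ * Z := ihout
          have s2 : q ^ j * ((1 - q) * D) ≤ q ^ j * ((1 - q) * ((kb : ℝ) * σ)) :=
            mul_le_mul_of_nonneg_left
              (mul_le_mul_of_nonneg_left hDkb (by linarith)) hqj0
          have s3 : q ^ j * ((1 - q) * ((kb : ℝ) * σ)) = q ^ j * (κ * σ) := by
            rw [← hκq]; ring
          have key : (1 - q ^ (j + 1)) * D ≤ κ * (Z + σ) := by
            have hps : q ^ (j + 1) = q ^ j * q := pow_succ q j
            nlinarith [s1, s2, s3]
          rw [hsplit]; linarith [key]
  intro T hTcard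
  have hkR : (1 : ℝ) ≤ (k : ℝ) := by exact_mod_cast hk
  have h1 := main k 0 k (by omega) le_rfl T
    (by rw [hG0, Finset.sdiff_empty]; exact hTcard)
  rw [hG0, hU0, Finset.union_empty, zero_add] at h1
  -- h1 : (1 - (1 - κ/k)^k) * (U T - 0) ≤ κ * (U (G k) - 0)
  have h1' : (1 - (1 - κ / (k : ℝ)) ^ k) * U T ≤ κ * U (G k) := by
    simpa using h1
  have hfirst : (1 / κ) * (1 - (1 - κ / (k : ℝ)) ^ k) * U T ≤ U (G k) := by
    rw [mul_assoc]
    rw [one_div, inv_mul_le_iff₀ hκ0]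
    linarith [h1']
  refine ⟨hfirst, ?_⟩
  have hUT0 : 0 ≤ U T := hUnn T
  have hq0 : (0:ℝ) ≤ 1 - κ / (k : ℝ) := by
    have : κ / (k : ℝ) ≤ 1 := by
      rw [div_le_one (by linarith)]; linarith
    linarith
  have hexp : (1 - κ / (k : ℝ)) ^ k ≤ Real.exp (-κ) := by
    have hstep1 : 1 - κ / (k : ℝ) ≤ Real.exp (-(κ / (k : ℝ))) := by
      have := Real.add_one_le_exp (-(κ / (k : ℝ)))
      linarith
    calc (1 - κ / (k : ℝ)) ^ k ≤ (Real.exp (-(κ / (k : ℝ)))) ^ k :=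
          pow_le_pow_left₀ hq0 hstep1 k
      _ = Real.exp ((k : ℝ) * (-(κ / (k : ℝ)))) := by
          rw [← Real.exp_nat_mul]
      _ = Real.exp (-κ) := by
          have hkne : ((k : ℝ)) ≠ 0 := by linarith
          congr 1
          field_simp
  have hcoef : (1 - Real.exp (-κ)) / κ ≤ (1 / κ) * (1 - (1 - κ / (k : ℝ)) ^ k) := by
    rw [one_div, inv_mul_eq_div, div_le_div_iff_of_pos_right hκ0]  -- may need adjust
    linarith
  calc ((1 - Real.exp (-κ)) / κ) * U T
      ≤ (1 / κ) * (1 - (1 - κ / (k : ℝ)) ^ k) * U T :=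
        mul_le_mul_of_nonneg_right hcoef hUT0
    _ ≤ U (G k) := hfirst
end
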